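/- Let m₁,…,m₅ > 0 with m₁+m₃+m₅ = 1, m₂+m₄ = 1, m₂+m₅ < 1, and M := m₁+m₃−m₅m₂/m₄. Then for r ∈ (0,1), with m_k^{(r)} = (1−r)m_k for k ∈ {1,3,5} and m_k^{(r)} = (1−r²)m_k for k ∈ {2,4}: 1 − (1 − m₅^{(r)}/m₄^{(r)})/(m₁^{(r)} + m₃^{(r)} − m₅^{(r)}m₂^{(r)}/m₄^{(r)}) ≤ −r/(1−r), i.e., α₁ − (1 − m₅^{(r)}/m₄^{(r)})/(m₁^{(r)}+m₃^{(r)}−m₅^{(r)}m₂^{(r)}/m₄^{(r)}) ≤ −r/(1−r) with α₁ = 1. -/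

import Mathlib

/-- Negative drift of order `r/(1−r)` under the multi-scale heavy traffic scaling:
with `m_k^{(r)} = (1−r)m_k` for `k ∈ {1,3,5}` and `m_k^{(r)} = (1−r²)m_k` for
`k ∈ {2,4}`, `1 − (1 − m₅^{(r)}/m₄^{(r)})/(m₁^{(r)}+m₃^{(r)}−m₅^{(r)}m₂^{(r)}/m₄^{(r)}) ≤ −r/(1−r)`. -/
theorem stmt19 (m₁ m₂ m₃ m₄ m₅ : ℝ)
    (h₁ : 0 < m₁) (h₂ : 0 < m₂) (h₃ : 0 < m₃) (h₄ : 0 < m₄) (h₅ : 0 < m₅)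
    (hs1 : m₁ + m₃ + m₅ = 1) (hs2 : m₂ + m₄ = 1) (hv : m₂ + m₅ < 1)
    (hM : 0 < m₁ + m₃ - m₅ * (m₂ / m₄)) :
    ∀ r ∈ Set.Ioo (0 : ℝ) 1,
      let m₁r := (1 - r) * m₁
      let m₃r := (1 - r) * m₃
      let m₅r := (1 - r) * m₅
      let m₂r := (1 - r ^ 2) * m₂
      let m₄r := (1 - r ^ 2) * m₄
      (1 : ℝ) - (1 - m₅r / m₄r) / (m₁r + m₃r - m₅r * (m₂r / m₄r)) ≤ -r / (1 - r) := by
  intro r hr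
  obtain ⟨hr0, hr1⟩ := hr
  intro m₁r m₃r m₅r m₂r m₄r
  have h1r : (0:ℝ) < 1 - r := by linarith
  have h1pr : (0:ℝ) < 1 + r := by linarith
  have hsq : (1:ℝ) - r ^ 2 = (1 - r) * (1 + r) := by ring
  have e1 : m₅r / m₄r = m₅ / ((1 + r) * m₄) := by
    simp only [m₅r, m₄r, hsq]
    rw [div_eq_div_iff (by positivity) (by positivity)]
    ring
  have e2 : m₅r * (m₂r / m₄r) = (1 - r) * (m₅ * (m₂ / m₄)) := by
    simp only [m₅r, m₂r, m₄r, hsq]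
    field_simp
  have hD : m₁r + m₃r - m₅r * (m₂r / m₄r)
      = (1 - r) * (m₁ + m₃ - m₅ * (m₂ / m₄)) := by
    simp only [m₁r, m₃r]; rw [e2]; ring
  rw [hD, e1]
  set M := m₁ + m₃ - m₅ * (m₂ / m₄) with hMdef
  have hkey : M ≤ 1 - m₅ / ((1 + r) * m₄) := by
    have hmono : m₅ / ((1 + r) * m₄) ≤ m₅ / m₄ := by
      apply div_le_div_of_nonneg_left h₅.le h₄
      nlinarith
    have hid : m₅ / m₄ = m₅ + m₅ * (m₂ / m₄) := by
      field_simp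
      nlinarith [hs2, h₅]
    have : M = 1 - m₅ - m₅ * (m₂ / m₄) := by rw [hMdef]; linarith
    rw [this]
    linarith [hmono, hid]
  have h2 : M / ((1 - r) * M) = 1 / (1 - r) := by
    rw [div_eq_div_iff (by positivity) (ne_of_gt h1r)]
    ring
  have h3 : 1 / (1 - r) ≤ (1 - m₅ / ((1 + r) * m₄)) / ((1 - r) * M) := by
    rw [← h2]
    exact div_le_div_of_nonneg_right hkey (by positivity)
  have h4' : -r / (1 - r) = 1 - 1 / (1 - r) := by
    field_simp
    ring
  rw [h4']
  linarith
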